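/- Let G : ℝ^p → ℝ^p be continuous, {x_k} a sequence such that for every x⋆ with G x⋆ = 0 the sequence {‖x_k - x⋆‖²} converges, and ‖G x_k‖ → 0. If the zero set of G is nonempty and {x_k} is bounded (which follows from the convergence of ‖x_k - x⋆‖ for some zero x⋆), then {x_k} converges to a point x̄ with G x̄ = 0. -/
import Mathlib

open Filter Topology

theorem opial_type_convergence
    (p : ℕ) (G : EuclideanSpace ℝ (Fin p) → EuclideanSpace ℝ (Fin p))
    (hG : Continuous G)
    (x : ℕ → EuclideanSpace ℝ (Fin p))
    (hzer : ∃ xs, G xs = 0)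
    (hfejer : ∀ xs, G xs = 0 →
      ∃ L : ℝ, Filter.Tendsto (fun k => ‖x k - xs‖^2) Filter.atTop (nhds L))
    (hres : Filter.Tendsto (fun k => ‖G (x k)‖) Filter.atTop (nhds 0)) :
    ∃ xb, G xb = 0 ∧ Filter.Tendsto x Filter.atTop (nhds xb) := by
  obtain ⟨xs, hxs⟩ := hzer
  obtain ⟨L, hL⟩ := hfejer xs hxs
  -- the sequence is bounded
  have hb : Bornology.IsBounded (Set.range x) := by
    obtain ⟨C, hC⟩ := hL.bddAbove_range
    simp only [upperBounds, Set.mem_range, forall_exists_index] at hC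
    apply isBounded_iff_forall_norm_le.2
    refine ⟨Real.sqrt C + ‖xs‖, ?_⟩
    rintro _ ⟨n, rfl⟩
    have h1 : ‖x n - xs‖^2 ≤ C := hC n rfl
    have h2 : ‖x n - xs‖ ≤ Real.sqrt C := by
      have := Real.sqrt_le_sqrt h1
      simpa [Real.sqrt_sq (norm_nonneg _)] using this
    calc ‖x n‖ = ‖(x n - xs) + xs‖ := by rw [sub_add_cancel]
      _ ≤ ‖x n - xs‖ + ‖xs‖ := norm_add_le _ _
      _ ≤ Real.sqrt C + ‖xs‖ := by linarith
  -- extract a convergent subsequence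
  obtain ⟨a, -, φ, hφ, ha⟩ := tendsto_subseq_of_bounded hb (fun n => Set.mem_range_self n)
  refine ⟨a, ?_, ?_⟩
  · -- G a = 0
    have h1 : Tendsto (fun k => ‖G (x (φ k))‖) atTop (𝓝 ‖G a‖) :=
      ((hG.continuousAt.tendsto.comp ha).norm)
    have h2 : Tendsto (fun k => ‖G (x (φ k))‖) atTop (𝓝 0) :=
      hres.comp hφ.tendsto_atTop
    have := tendsto_nhds_unique h1 h2
    exact norm_eq_zero.mp this
  · -- convergence of the whole sequence
    obtain ⟨L', hL'⟩ := hfejer a (by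
      have h1 : Tendsto (fun k => ‖G (x (φ k))‖) atTop (𝓝 ‖G a‖) :=
        ((hG.continuousAt.tendsto.comp ha).norm)
      have h2 : Tendsto (fun k => ‖G (x (φ k))‖) atTop (𝓝 0) :=
        hres.comp hφ.tendsto_atTop
      exact norm_eq_zero.mp (tendsto_nhds_unique h1 h2))
    have hsub : Tendsto (fun k => ‖x (φ k) - a‖^2) atTop (𝓝 0) := by
      have : Tendsto (fun k => x (φ k) - a) atTop (𝓝 0) := by
        simpa using ha.sub_const a
      have := (this.norm)
      simpa using (this.pow 2)
    have hsub' : Tendsto (fun k => ‖x (φ k) - a‖^2) atTop (𝓝 L') :=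
      hL'.comp hφ.tendsto_atTop
    have hL0 : L' = 0 := tendsto_nhds_unique hsub' hsub
    rw [hL0] at hL'
    have hnorm : Tendsto (fun k => ‖x k - a‖) atTop (𝓝 0) := by
      have := hL'.sqrt
      simpa [Real.sqrt_sq (norm_nonneg _)] using this
    exact tendsto_iff_norm_sub_tendsto_zero.mpr hnorm
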